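/- (Theorem 2(i)) Fix K≥1, stratum weights Π_{[k]}>0 with Σ_kΠ_{[k]}=1, treated proportions e_{[k]1}∈(0,1) with e_{[k]0}=1−e_{[k]1}, nonnegative reals S²_{[k]1}, S²_{[k]0}, S²_{[k]τ} with e_{[k]1}^{-1}S²_{[k]1}+e_{[k]0}^{-1}S²_{[k]0}>0 for every k, and a total sampling proportion f>0. For stratum sampling proportions f_{[k]}>0 satisfying Σ_kΠ_{[k]}f_{[k]}=f, define V_{ττ}({f_{[k]}}) = Σ_k (fΠ_{[k]}/f_{[k]})(e_{[k]1}^{-1}S²_{[k]1}+e_{[k]0}^{-1}S²_{[k]0}) − fΣ_kΠ_{[k]}S²_{[k]τ}. Then V_{ττ}({f_{[k]}}) ≥ [Σ_kΠ_{[k]}√(e_{[k]1}^{-1}S²_{[k]1}+e_{[k]0}^{-1}S²_{[k]0})]² − fΣ_kΠ_{[k]}S²_{[k]τ}, with equality if and only if f_{[k]} = f·√(e_{[k]1}^{-1}S²_{[k]1}+e_{[k]0}^{-1}S²_{[k]0}) / Σ_{k'}Π_{[k']}√(e_{[k']1}^{-1}S²_{[k']1}+e_{[k']0}^{-1}S²_{[k']0})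 for every k; i.e., this choice of stratum-specific sampling proportions minimizes the asymptotic variance of the stratified difference-in-means estimator. -/

import Mathlib

open MeasureTheory ProbabilityTheory Filter Matrix
open scoped ENNReal NNReal

noncomputable section

namespace SurveyExperiments

/-- The uniform probability measure on a finite set of outcomes. -/
def unif {α : Type*} [MeasurableSpace α] (s : Finset α) : Measure α :=
  (s.card : ℝ≥0∞)⁻¹ • ∑ a ∈ s, MeasureTheory.Measure.dirac a

/-- The covariance of two real-valued random variables. -/
def covRV {Ω : Type*} [MeasurableSpace Ω] (μ : Measure Ω) (f g : Ω → ℝ) : ℝ :=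
  ∫ ω, (f ω - ∫ x, f x ∂μ) * (g ω - ∫ x, g x ∂μ) ∂μ

/-- The total variation distance between two measures. -/
def dTV {α : Type*} [MeasurableSpace α] (P Q : Measure α) : ℝ :=
  ⨆ A : Set α, |(P A).toReal - (Q A).toReal|

/-- The standard Gaussian measure on `ℝ^J`. -/
def stdGaussianPi (J : ℕ) : Measure (Fin J → ℝ) := Measure.pi fun _ => gaussianReal 0 1

/-- The law `L_{J,a}` of the first coordinate of a standard Gaussian vector in `ℝ^J`
conditioned on the event that its squared norm is at most `a`. -/
def truncGaussian (J : ℕ) [NeZero J] (a : ℝ) : Measure ℝ :=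
  Measure.map (fun x => x 0)
    (ProbabilityTheory.cond (stdGaussianPi J) {x | ∑ i, (x i) ^ 2 ≤ a})

/-- `ν_{J,a}`, the variance of the truncated Gaussian `L_{J,a}`. -/
def nu (J : ℕ) [NeZero J] (a : ℝ) : ℝ := variance id (truncGaussian J a)

/-- The law of `√v (√(1-rW-rX) ε + √rW L_{J1,aS} + √rX L_{J2,aT})` with independent
`ε ~ N(0,1)`, `L_{J1,aS}`, `L_{J2,aT}`. -/
def rrLimitLaw (v rW rX : ℝ) (J1 J2 : ℕ) [NeZero J1] [NeZero J2] (aS aT : ℝ) : Measure ℝ :=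
  Measure.map
    (fun p : ℝ × ℝ × ℝ =>
      Real.sqrt v * (Real.sqrt (1 - rW - rX) * p.1 + Real.sqrt rW * p.2.1 + Real.sqrt rX * p.2.2))
    ((gaussianReal 0 1).prod ((truncGaussian J1 aS).prod (truncGaussian J2 aT)))

/-- The `p`-th quantile of a measure on `ℝ`. -/
def quantile (μ : Measure ℝ) (p : ℝ) : ℝ := sInf {x : ℝ | ENNReal.ofReal p ≤ μ (Set.Iic x)}

/-- The data of a stratified (randomized survey) experiment: a population of `N` units
partitioned into `K` strata by `st`, with `nk k` units sampled and `nk1 k` sampled units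
treated in stratum `k`. -/
structure SRSE where
  K : ℕ
  N : ℕ
  st : Fin N → Fin K
  nk : Fin K → ℕ
  nk1 : Fin K → ℕ

namespace SRSE

variable (E : SRSE)

def stratum (k : Fin E.K) : Finset (Fin E.N) := Finset.univ.filter fun i => E.st i = k
def Nk (k : Fin E.K) : ℕ := (E.stratum k).card
def nk0 (k : Fin E.K) : ℕ := E.nk k - E.nk1 k
def n : ℕ := ∑ k, E.nk k
def Pi (k : Fin E.K) : ℝ := (E.Nk k : ℝ) / (E.N : ℝ)
def pik (k : Fin E.K) : ℝ := (E.nk k : ℝ) / (E.n : ℝ)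
def fk (k : Fin E.K) : ℝ := (E.nk k : ℝ) / (E.Nk k : ℝ)
def f : ℝ := (E.n : ℝ) / (E.N : ℝ)
def e1 (k : Fin E.K) : ℝ := (E.nk1 k : ℝ) / (E.nk k : ℝ)
def e0 (k : Fin E.K) : ℝ := (E.nk0 k : ℝ) / (E.nk k : ℝ)

/-- Sample space: a pair of sampling indicators and treatment indicators. -/
abbrev Omega := (Fin E.N → Bool) × (Fin E.N → Bool)

/-- The attainable pairs of indicators: `nk k` sampled and `nk1 k` treated units in each
stratum `k`, with treated units sampled. -/
def valid : Finset E.Omega :=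
  Finset.univ.filter fun ω =>
    (∀ k, ((E.stratum k).filter fun i => ω.1 i = true).card = E.nk k) ∧
    (∀ k, ((E.stratum k).filter fun i => ω.1 i = true ∧ ω.2 i = true).card = E.nk1 k) ∧
    (∀ i, ω.2 i = true → ω.1 i = true)

/-- The stratified randomized survey experiment (SRSE) design: stratified random sampling
without replacement followed by stratified randomization, i.e. the uniform distribution over
all attainable pairs of indicator vectors. -/
def P : Measure E.Omega := unif E.valid

def Z (ω : E.Omega) (i : Fin E.N) : ℝ := if ω.1 i then 1 else 0
def T (ω : E.Omega) (i : Fin E.N) : ℝ := if ω.2 i then 1 else 0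

def meanK (a : Fin E.N → ℝ) (k : Fin E.K) : ℝ := (∑ i ∈ E.stratum k, a i) / (E.Nk k : ℝ)
def covK (a b : Fin E.N → ℝ) (k : Fin E.K) : ℝ :=
  (∑ i ∈ E.stratum k, (a i - E.meanK a k) * (b i - E.meanK b k)) / ((E.Nk k : ℝ) - 1)
def meanAll (a : Fin E.N → ℝ) : ℝ := (∑ i, a i) / (E.N : ℝ)
def varAll (a : Fin E.N → ℝ) : ℝ := (∑ i, (a i - E.meanAll a) ^ 2) / ((E.N : ℝ) - 1)

def mean1 (a : Fin E.N → ℝ) (k : Fin E.K) (ω : E.Omega) : ℝ :=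
  (∑ i ∈ E.stratum k, E.Z ω i * E.T ω i * a i) / (E.nk1 k : ℝ)
def mean0 (a : Fin E.N → ℝ) (k : Fin E.K) (ω : E.Omega) : ℝ :=
  (∑ i ∈ E.stratum k, E.Z ω i * (1 - E.T ω i) * a i) / (E.nk0 k : ℝ)
def meanS (a : Fin E.N → ℝ) (k : Fin E.K) (ω : E.Omega) : ℝ :=
  (∑ i ∈ E.stratum k, E.Z ω i * a i) / (E.nk k : ℝ)

/-- The stratified difference-in-means estimator. -/
def hatTau (Y1 Y0 : Fin E.N → ℝ) (ω : E.Omega) : ℝ :=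
  ∑ k, E.Pi k * (E.mean1 Y1 k ω - E.mean0 Y0 k ω)
/-- The finite-population average treatment effect. -/
def tau (Y1 Y0 : Fin E.N → ℝ) : ℝ := ∑ k, E.Pi k * (E.meanK Y1 k - E.meanK Y0 k)
/-- The treated/control covariate-mean-difference `τ̂_X`. -/
def hatTauX {J : ℕ} (X : Fin E.N → Fin J → ℝ) (ω : E.Omega) : Fin J → ℝ := fun j =>
  ∑ k, E.Pi k * (E.mean1 (fun i => X i j) k ω - E.mean0 (fun i => X i j) k ω)
/-- The sampled/population covariate-mean-difference `δ̂_W`. -/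
def hatDeltaW {J : ℕ} (W : Fin E.N → Fin J → ℝ) (ω : E.Omega) : Fin J → ℝ := fun j =>
  ∑ k, E.Pi k * (E.meanS (fun i => W i j) k ω - E.meanK (fun i => W i j) k)

def sCov1 (a b : Fin E.N → ℝ) (k : Fin E.K) (ω : E.Omega) : ℝ :=
  (∑ i ∈ E.stratum k, E.Z ω i * E.T ω i * (a i - E.mean1 a k ω) * (b i - E.mean1 b k ω)) /
    ((E.nk1 k : ℝ) - 1)
def sCov0 (a b : Fin E.N → ℝ) (k : Fin E.K) (ω : E.Omega) : ℝ :=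
  (∑ i ∈ E.stratum k, E.Z ω i * (1 - E.T ω i) * (a i - E.mean0 a k ω) * (b i - E.mean0 b k ω)) /
    ((E.nk0 k : ℝ) - 1)
def sCovS (a b : Fin E.N → ℝ) (k : Fin E.K) (ω : E.Omega) : ℝ :=
  (∑ i ∈ E.stratum k, E.Z ω i * (a i - E.meanS a k ω) * (b i - E.meanS b k ω)) /
    ((E.nk k : ℝ) - 1)

/-- The `(τ,τ)` entry of the covariance matrix `V`. -/
def Vtt (Y1 Y0 : Fin E.N → ℝ) : ℝ :=
  ∑ k, (E.Pi k) ^ 2 / E.pik k *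
    (E.covK Y1 Y1 k / E.e1 k + E.covK Y0 Y0 k / E.e0 k -
      E.fk k * E.covK (fun i => Y1 i - Y0 i) (fun i => Y1 i - Y0 i) k)
/-- The `(τ,X)` block of `V`. -/
def VtX {J : ℕ} (Y1 Y0 : Fin E.N → ℝ) (X : Fin E.N → Fin J → ℝ) : Fin J → ℝ := fun j =>
  ∑ k, (E.Pi k) ^ 2 / E.pik k *
    (E.covK (fun i => X i j) Y1 k / E.e1 k + E.covK (fun i => X i j) Y0 k / E.e0 k)
/-- The `(τ,W)` block of `V`. -/
def VtW {J : ℕ} (Y1 Y0 : Fin E.N → ℝ) (W : Fin E.N → Fin J → ℝ) : Fin J → ℝ := fun j =>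
  ∑ k, (E.Pi k) ^ 2 / E.pik k *
    ((1 - E.fk k) * E.covK (fun i => W i j) (fun i => Y1 i - Y0 i) k)
/-- The `(X,X)` block of `V`. -/
def VXX {J : ℕ} (X : Fin E.N → Fin J → ℝ) : Matrix (Fin J) (Fin J) ℝ :=
  Matrix.of fun j j' =>
    ∑ k, (E.Pi k) ^ 2 / E.pik k *
      (E.covK (fun i => X i j) (fun i => X i j') k / (E.e1 k * E.e0 k))
/-- The `(W,W)` block of `V`. -/
def VWW {J : ℕ} (W : Fin E.N → Fin J → ℝ) : Matrix (Fin J) (Fin J) ℝ :=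
  Matrix.of fun j j' =>
    ∑ k, (E.Pi k) ^ 2 / E.pik k *
      ((1 - E.fk k) * E.covK (fun i => W i j) (fun i => W i j') k)

/-- The covariance matrix of `δ̂_W` under stratified random sampling. -/
def covWSampling {J : ℕ} (W : Fin E.N → Fin J → ℝ) : Matrix (Fin J) (Fin J) ℝ :=
  Matrix.of fun j j' =>
    ∑ k, (E.Pi k) ^ 2 * ((E.nk k : ℝ)⁻¹ - (E.Nk k : ℝ)⁻¹) *
      E.covK (fun i => W i j) (fun i => W i j') k
/-- The Mahalanobis sampling-balance criterion `M_S`. -/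
def MS {J : ℕ} (W : Fin E.N → Fin J → ℝ) (ω : E.Omega) : ℝ :=
  E.hatDeltaW W ω ⬝ᵥ ((E.covWSampling W)⁻¹ *ᵥ E.hatDeltaW W ω)
/-- The conditional covariance matrix of `τ̂_X` given the sample. -/
def covXAssign {J : ℕ} (X : Fin E.N → Fin J → ℝ) (ω : E.Omega) : Matrix (Fin J) (Fin J) ℝ :=
  Matrix.of fun j j' =>
    ∑ k, (E.Pi k) ^ 2 * ((E.nk k : ℝ) / ((E.nk1 k : ℝ) * (E.nk0 k : ℝ))) *
      E.sCovS (fun i => X i j) (fun i => X i j') k ω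
/-- The Mahalanobis assignment-balance criterion `M_T`. -/
def MT {J : ℕ} (X : Fin E.N → Fin J → ℝ) (ω : E.Omega) : ℝ :=
  E.hatTauX X ω ⬝ᵥ ((E.covXAssign X ω)⁻¹ *ᵥ E.hatTauX X ω)
/-- The acceptance event `{M_S ≤ a_S, M_T ≤ a_T}`. -/
def accept {J1 J2 : ℕ} (W : Fin E.N → Fin J1 → ℝ) (X : Fin E.N → Fin J2 → ℝ) (aS aT : ℝ) :
    Set E.Omega := {ω | E.MS W ω ≤ aS ∧ E.MT X ω ≤ aT}

/-- The SRSRR design: the SRSE design conditioned on acceptance of both balance criteria. -/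
def Prr {J1 J2 : ℕ} (W : Fin E.N → Fin J1 → ℝ) (X : Fin E.N → Fin J2 → ℝ) (aS aT : ℝ) :
    Measure E.Omega := ProbabilityTheory.cond E.P (E.accept W X aS aT)

/-- The conservative variance estimator `V̂_ττ`. -/
def hatVtt (Y1 Y0 : Fin E.N → ℝ) (ω : E.Omega) : ℝ :=
  ∑ k, (E.Pi k) ^ 2 / E.pik k * (E.sCov1 Y1 Y1 k ω / E.e1 k + E.sCov0 Y0 Y0 k ω / E.e0 k)
/-- The estimator `V̂_τX`. -/
def hatVtX {J : ℕ} (Y1 Y0 : Fin E.N → ℝ) (X : Fin E.N → Fin J → ℝ) (ω : E.Omega) : Fin J → ℝ :=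
  fun j => ∑ k, (E.Pi k) ^ 2 / E.pik k *
    (E.sCov1 (fun i => X i j) Y1 k ω / E.e1 k + E.sCov0 (fun i => X i j) Y0 k ω / E.e0 k)
/-- The estimator `V̂_τW`. -/
def hatVtW {J : ℕ} (Y1 Y0 : Fin E.N → ℝ) (W : Fin E.N → Fin J → ℝ) (ω : E.Omega) : Fin J → ℝ :=
  fun j => ∑ k, (E.Pi k) ^ 2 / E.pik k *
    ((1 - E.fk k) * (E.sCov1 (fun i => W i j) Y1 k ω - E.sCov0 (fun i => W i j) Y0 k ω))
/-- The estimator `V̂_XX`. -/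
def hatVXX {J : ℕ} (X : Fin E.N → Fin J → ℝ) (ω : E.Omega) : Matrix (Fin J) (Fin J) ℝ :=
  Matrix.of fun j j' => ∑ k, (E.Pi k) ^ 2 / E.pik k *
    (E.sCovS (fun i => X i j) (fun i => X i j') k ω / (E.e1 k * E.e0 k))
/-- The plug-in estimator `R̂²_W` (also used for `R̂²_E` with analysis-stage covariates). -/
def hatRW2 {J : ℕ} (Y1 Y0 : Fin E.N → ℝ) (W : Fin E.N → Fin J → ℝ) (ω : E.Omega) : ℝ :=
  (E.hatVtW Y1 Y0 W ω ⬝ᵥ ((E.VWW W)⁻¹ *ᵥ E.hatVtW Y1 Y0 W ω)) / E.hatVtt Y1 Y0 ω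
/-- The plug-in estimator `R̂²_X` (also used for `R̂²_C` with analysis-stage covariates). -/
def hatRX2 {J : ℕ} (Y1 Y0 : Fin E.N → ℝ) (X : Fin E.N → Fin J → ℝ) (ω : E.Omega) : ℝ :=
  (E.hatVtX Y1 Y0 X ω ⬝ᵥ ((E.hatVXX X ω)⁻¹ *ᵥ E.hatVtX Y1 Y0 X ω)) / E.hatVtt Y1 Y0 ω

/-- The estimated regression-adjustment coefficient `β̂`. -/
def hatBeta {J : ℕ} (Y1 Y0 : Fin E.N → ℝ) (C : Fin E.N → Fin J → ℝ) (ω : E.Omega) : Fin J → ℝ :=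
  (E.hatVXX C ω)⁻¹ *ᵥ E.hatVtX Y1 Y0 C ω
/-- The estimated regression-adjustment coefficient `γ̂`. -/
def hatGamma {J : ℕ} (Y1 Y0 : Fin E.N → ℝ) (Ecov : Fin E.N → Fin J → ℝ) (ω : E.Omega) :
    Fin J → ℝ :=
  (E.VWW Ecov)⁻¹ *ᵥ E.hatVtW Y1 Y0 Ecov ω
/-- The regression-adjusted estimator `τ̂_adj = τ̂ - β̂ᵀτ̂_C - γ̂ᵀδ̂_E`. -/
def hatTauAdj {J3 J4 : ℕ} (Y1 Y0 : Fin E.N → ℝ) (C : Fin E.N → Fin J4 → ℝ)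
    (Ecov : Fin E.N → Fin J3 → ℝ) (ω : E.Omega) : ℝ :=
  E.hatTau Y1 Y0 ω - E.hatBeta Y1 Y0 C ω ⬝ᵥ E.hatTauX C ω -
    E.hatGamma Y1 Y0 Ecov ω ⬝ᵥ E.hatDeltaW Ecov ω

/-- The vector stratified difference-in-means estimator `τ̂_R`. -/
def hatTauVec {d : ℕ} (R1 R0 : Fin E.N → Fin d → ℝ) (ω : E.Omega) : Fin d → ℝ := fun j =>
  ∑ k, E.Pi k * (E.mean1 (fun i => R1 i j) k ω - E.mean0 (fun i => R0 i j) k ω)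
/-- The vector estimand `τ_R`. -/
def tauVec {d : ℕ} (R1 R0 : Fin E.N → Fin d → ℝ) : Fin d → ℝ := fun j =>
  ∑ k, E.Pi k * (E.meanK (fun i => R1 i j) k - E.meanK (fun i => R0 i j) k)
/-- The covariance matrix `V_R` of `√n (τ̂_R - τ_R)`. -/
def VRmat {d : ℕ} (R1 R0 : Fin E.N → Fin d → ℝ) : Matrix (Fin d) (Fin d) ℝ :=
  Matrix.of fun j j' =>
    ∑ k, (E.Pi k) ^ 2 / E.pik k *
      (E.covK (fun i => R1 i j) (fun i => R1 i j') k / E.e1 k +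
        E.covK (fun i => R0 i j) (fun i => R0 i j') k / E.e0 k -
        E.fk k * E.covK (fun i => R1 i j - R0 i j) (fun i => R1 i j' - R0 i j') k)

/-- The attainable sampling vectors. -/
def validZ : Finset (Fin E.N → Bool) :=
  Finset.univ.filter fun z => ∀ k, ((E.stratum k).filter fun i => z i = true).card = E.nk k
/-- Stratified random sampling without replacement: the uniform distribution over attainable
sampling vectors. -/
def Psamp : Measure (Fin E.N → Bool) := unif E.validZ
/-- `δ̂_W` as a function of the sampling vector alone. -/
def deltaWz {J : ℕ} (W : Fin E.N → Fin J → ℝ) (z : Fin E.N → Bool) : Fin J → ℝ := fun j =>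
  ∑ k, E.Pi k *
    ((∑ i ∈ E.stratum k, (if z i then (1 : ℝ) else 0) * W i j) / (E.nk k : ℝ) -
      E.meanK (fun i => W i j) k)

/-- The attainable treatment-assignment vectors given the sampling vector `z`. -/
def validT (z : Fin E.N → Bool) : Finset (Fin E.N → Bool) :=
  Finset.univ.filter fun t =>
    (∀ k, ((E.stratum k).filter fun i => z i = true ∧ t i = true).card = E.nk1 k) ∧
    (∀ i, t i = true → z i = true)
/-- Stratified randomization of the sampled units, conditionally on the sampling vector `z`. -/
def Pgiven (z : Fin E.N → Bool) : Measure E.Omega :=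
  unif ((E.validT z).image fun t => (z, t))

/-- `M_S` as a function of the sampling vector alone. -/
def MSz {J : ℕ} (W : Fin E.N → Fin J → ℝ) (z : Fin E.N → Bool) : ℝ := E.MS W (z, z)
/-- The acceptable sampling vectors. -/
def acceptZ {J : ℕ} (W : Fin E.N → Fin J → ℝ) (aS : ℝ) : Finset (Fin E.N → Bool) :=
  E.validZ.filter fun z => E.MSz W z ≤ aS
/-- The acceptable assignment vectors given a sampling vector `z`. -/
def acceptT {J : ℕ} (X : Fin E.N → Fin J → ℝ) (aT : ℝ) (z : Fin E.N → Bool) :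
    Finset (Fin E.N → Bool) := (E.validT z).filter fun t => E.MT X (z, t) ≤ aT
/-- The set `M` of jointly acceptable pairs. -/
def acceptedPairs {J1 J2 : ℕ} (W : Fin E.N → Fin J1 → ℝ) (X : Fin E.N → Fin J2 → ℝ)
    (aS aT : ℝ) : Finset E.Omega :=
  E.valid.filter fun ω => E.MS W ω ≤ aS ∧ E.MT X ω ≤ aT
/-- The single-stage rejective design: uniform over jointly acceptable pairs. -/
def singleStage {J1 J2 : ℕ} (W : Fin E.N → Fin J1 → ℝ) (X : Fin E.N → Fin J2 → ℝ)
    (aS aT : ℝ) : Measure E.Omega := unif (E.acceptedPairs W X aS aT)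
/-- The two-stage rejective design: first a uniform acceptable sampling, then a uniform
acceptable assignment given the sampling. -/
def twoStage {J1 J2 : ℕ} (W : Fin E.N → Fin J1 → ℝ) (X : Fin E.N → Fin J2 → ℝ) (aS aT : ℝ) :
    Measure E.Omega :=
  ((E.acceptZ W aS).card : ℝ≥0∞)⁻¹ • ∑ z ∈ E.acceptZ W aS,
    (((E.acceptT X aT z).card : ℝ≥0∞)⁻¹ • ∑ t ∈ E.acceptT X aT z, Measure.dirac (z, t))
/-- The conditional acceptance probability `P(M_T ≤ a_T ∣ Z = z)`. -/
def condAcceptProb {J : ℕ} (X : Fin E.N → Fin J → ℝ) (aT : ℝ) (z : Fin E.N → Bool) : ℝ :=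
  ((E.acceptT X aT z).card : ℝ) / ((E.validT z).card : ℝ)

end SRSE


/-- Theorem 2(i): given the treated proportions and the total sampling
proportion `f`, the asymptotic variance `V_ττ` over stratum sampling proportions `f_[k]`
subject to the budget constraint `∑ₖ Π_[k] f_[k] = f` is bounded below by
`(∑ₖ Π_[k] √(S²_[k]1/e_[k]1 + S²_[k]0/e_[k]0))² - f ∑ₖ Π_[k] S²_[k]τ`, with equality iff
`f_[k] ∝ √(S²_[k]1/e_[k]1 + S²_[k]0/e_[k]0)`. -/
theorem statement5 (K : ℕ) (hK : 1 ≤ K)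
    (Pi e1 S1sq S0sq Stsq fk : Fin K → ℝ) (f : ℝ)
    (hPi : ∀ k, 0 < Pi k) (hPisum : ∑ k, Pi k = 1)
    (he : ∀ k, 0 < e1 k ∧ e1 k < 1)
    (hS1 : ∀ k, 0 ≤ S1sq k) (hS0 : ∀ k, 0 ≤ S0sq k) (hSt : ∀ k, 0 ≤ Stsq k)
    (hpos : ∀ k, 0 < S1sq k / e1 k + S0sq k / (1 - e1 k))
    (hf : 0 < f) (hfk : ∀ k, 0 < fk k) (hbudget : ∑ k, Pi k * fk k = f) :
    let g : Fin K → ℝ := fun k => S1sq k / e1 k + S0sq k / (1 - e1 k)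
    let V : ℝ := (∑ k, f * Pi k / fk k * g k) - f * ∑ k, Pi k * Stsq k
    let bound : ℝ := (∑ k, Pi k * Real.sqrt (g k)) ^ 2 - f * ∑ k, Pi k * Stsq k
    bound ≤ V ∧
      (V = bound ↔ ∀ k, fk k = f * Real.sqrt (g k) / ∑ k', Pi k' * Real.sqrt (g k')) := by
  intro g V bound
  have hg : ∀ k, 0 < g k := hpos
  haveI : Nonempty (Fin K) := Fin.pos_iff_nonempty.mp (by omega)
  set S := ∑ k, Pi k * Real.sqrt (g k) with hS
  have hSpos : 0 < S :=
    Finset.sum_pos (fun k _ => mul_pos (hPi k) (Real.sqrt_pos.2 (hg k)))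
      Finset.univ_nonempty
  have hfne : f ≠ 0 := ne_of_gt hf
  have hSne : S ≠ 0 := ne_of_gt hSpos
  have hak : ∀ k, (0 : ℝ) ≤ f * g k / fk k := fun k =>
    div_nonneg (mul_nonneg hf.le (hg k).le) (hfk k).le
  have hbk : ∀ k, (0 : ℝ) ≤ S ^ 2 * fk k / f := fun k =>
    div_nonneg (mul_nonneg (sq_nonneg S) (hfk k).le) hf.le
  -- per-stratum identity
  have key : ∀ k, Pi k * (Real.sqrt (f * g k / fk k) - Real.sqrt (S ^ 2 * fk k / f)) ^ 2
      = f * Pi k / fk k * g k + S ^ 2 / f * (Pi k * fk k)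
        - 2 * S * (Pi k * Real.sqrt (g k)) := by
    intro k
    have hfkne : fk k ≠ 0 := ne_of_gt (hfk k)
    have hab : Real.sqrt (f * g k / fk k) * Real.sqrt (S ^ 2 * fk k / f)
        = Real.sqrt (g k) * S := by
      rw [← Real.sqrt_mul (hak k)]
      have h2 : f * g k / fk k * (S ^ 2 * fk k / f) = (Real.sqrt (g k) * S) ^ 2 := by
        rw [mul_pow, Real.sq_sqrt (le_of_lt (hg k))]
        field_simp
      rw [h2, Real.sqrt_sq (mul_nonneg (Real.sqrt_nonneg _) hSpos.le)]
    have expand : (Real.sqrt (f * g k / fk k) - Real.sqrt (S ^ 2 * fk k / f)) ^ 2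
        = f * g k / fk k - 2 * (Real.sqrt (g k) * S) + S ^ 2 * fk k / f := by
      rw [sub_sq, Real.sq_sqrt (hak k), Real.sq_sqrt (hbk k), mul_assoc, hab]
    rw [expand]; ring
  have hterm_nonneg : ∀ k ∈ Finset.univ, (0 : ℝ) ≤
      Pi k * (Real.sqrt (f * g k / fk k) - Real.sqrt (S ^ 2 * fk k / f)) ^ 2 := by
    intro k _
    exact mul_nonneg (hPi k).le (sq_nonneg _)
  have hsum : ∑ k, Pi k * (Real.sqrt (f * g k / fk k) - Real.sqrt (S ^ 2 * fk k / f)) ^ 2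
      = V - bound := by
    have h1 : ∑ k, S ^ 2 / f * (Pi k * fk k) = S ^ 2 := by
      rw [← Finset.mul_sum, hbudget]; field_simp
    have h2 : ∑ k, 2 * S * (Pi k * Real.sqrt (g k)) = 2 * S * S := by
      rw [← Finset.mul_sum, ← hS]
    calc ∑ k, Pi k * (Real.sqrt (f * g k / fk k) - Real.sqrt (S ^ 2 * fk k / f)) ^ 2
        = ∑ k, (f * Pi k / fk k * g k + S ^ 2 / f * (Pi k * fk k)
            - 2 * S * (Pi k * Real.sqrt (g k))) :=
          Finset.sum_congr rfl fun k _ => key k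
      _ = (∑ k, f * Pi k / fk k * g k) + (∑ k, S ^ 2 / f * (Pi k * fk k))
            - ∑ k, 2 * S * (Pi k * Real.sqrt (g k)) := by
          rw [Finset.sum_sub_distrib, Finset.sum_add_distrib]
      _ = V - bound := by
          rw [h1, h2]; simp only [V, bound, ← hS]; ring
  have hle : bound ≤ V := by
    have := Finset.sum_nonneg hterm_nonneg
    rw [hsum] at this; linarith
  refine ⟨hle, ?_⟩
  constructor
  · intro hVb
    have hzero : ∑ k, Pi k * (Real.sqrt (f * g k / fk k) - Real.sqrt (S ^ 2 * fk k / f)) ^ 2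
        = 0 := by rw [hsum, hVb]; ring
    have hall := (Finset.sum_eq_zero_iff_of_nonneg hterm_nonneg).mp hzero
    intro k
    have hfkne : fk k ≠ 0 := ne_of_gt (hfk k)
    have hk := hall k (Finset.mem_univ k)
    have hsq : (Real.sqrt (f * g k / fk k) - Real.sqrt (S ^ 2 * fk k / f)) ^ 2 = 0 := by
      rcases mul_eq_zero.mp hk with h | h
      · exact absurd h (ne_of_gt (hPi k))
      · exact h
    have heq : Real.sqrt (f * g k / fk k) = Real.sqrt (S ^ 2 * fk k / f) :=
      sub_eq_zero.mp (pow_eq_zero_iff (n := 2) (by norm_num) |>.mp hsq)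
    have heq2 : f * g k / fk k = S ^ 2 * fk k / f := by
      have := congrArg (· ^ 2) heq
      simpa [Real.sq_sqrt (hak k), Real.sq_sqrt (hbk k)] using this
    have h3 : f ^ 2 * g k = S ^ 2 * fk k ^ 2 := by
      field_simp at heq2
      linear_combination heq2
    have h4 : S * fk k = f * Real.sqrt (g k) := by
      have hsq2 : (S * fk k) ^ 2 = (f * Real.sqrt (g k)) ^ 2 := by
        rw [mul_pow, mul_pow, Real.sq_sqrt (hg k).le]
        linarith [h3]
      have h5 : 0 ≤ S * fk k := (mul_pos hSpos (hfk k)).le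
      have h6 : 0 ≤ f * Real.sqrt (g k) := mul_nonneg hf.le (Real.sqrt_nonneg _)
      calc S * fk k = Real.sqrt ((S * fk k) ^ 2) := (Real.sqrt_sq h5).symm
        _ = Real.sqrt ((f * Real.sqrt (g k)) ^ 2) := by rw [hsq2]
        _ = f * Real.sqrt (g k) := Real.sqrt_sq h6
    rw [eq_div_iff hSne]
    linarith [h4]
  · intro hEq
    have hzero : ∀ k ∈ Finset.univ,
        Pi k * (Real.sqrt (f * g k / fk k) - Real.sqrt (S ^ 2 * fk k / f)) ^ 2 = 0 := by
      intro k _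
      have hfkv : fk k = f * Real.sqrt (g k) / S := hEq k
      have hsg : 0 < Real.sqrt (g k) := Real.sqrt_pos.2 (hg k)
      have hsgne : Real.sqrt (g k) ≠ 0 := ne_of_gt hsg
      have hg2 : Real.sqrt (g k) ^ 2 = g k := Real.sq_sqrt (hg k).le
      have harg : f * g k / fk k = S ^ 2 * fk k / f := by
        rw [hfkv, ← hg2]
        field_simp
        rw [Real.sq_sqrt (sq_nonneg (Real.sqrt (g k)))]
      rw [harg]
      simp
    have : V - bound = 0 := by rw [← hsum, Finset.sum_eq_zero hzero]
    linarith
end SurveyExperiments
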